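/- Suppose bc ≥ 4. Then the cluster variables y_m, m ∈ ℤ, are pairwise distinct elements of F. -/
import Mathlib


open MvPolynomial Finset

noncomputable section

/-- The ambient field `F = ℚ(y₁, y₂)`. -/
abbrev Fq : Type := FractionRing (MvPolynomial (Fin 2) ℚ)

/-- The two independent indeterminates of `F`. -/
def gen (i : Fin 2) : Fq := algebraMap (MvPolynomial (Fin 2) ℚ) Fq (X i)

/-- `y : ℤ → Fq` is the family of cluster variables of `A(b,c)`:
`y 1, y 2` are the two indeterminates and the exchange relations hold. -/
def IsClusterSeq (b c : ℕ) (y : ℤ → Fq) : Prop :=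
  y 1 = gen 0 ∧ y 2 = gen 1 ∧
    ∀ m : ℤ, y (m - 1) * y (m + 1) = (if Odd m then y m ^ b else y m ^ c) + 1

/-- The cluster algebra `A(b,c)`: the subring of `F` generated by all cluster variables. -/
def clusterAlg (y : ℤ → Fq) : Subring Fq := Subring.closure (Set.range y)

/-- The cluster variable `y m` as an element of the cluster algebra. -/
def yMem (y : ℤ → Fq) (m : ℤ) : clusterAlg y := ⟨y m, Subring.subset_closure ⟨m, rfl⟩⟩

/-- `f` is (the coefficient function of) a Laurent-polynomial expansion of `x`
in the cluster `{y m, y (m+1)}`. -/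
def IsLaurentExp (y : ℤ → Fq) (m : ℤ) (f : ℤ × ℤ →₀ ℤ) (x : Fq) : Prop :=
  x = ∑ γ ∈ f.support, (f γ : Fq) * y m ^ γ.1 * y (m + 1) ^ γ.2

/-- `x` is a positive element: it is nonzero and for every `m` its Laurent expansion in
`y m, y (m+1)` has nonnegative coefficients. -/
def IsPositive (y : ℤ → Fq) (x : Fq) : Prop :=
  x ≠ 0 ∧ ∀ m : ℤ, ∃ f : ℤ × ℤ →₀ ℤ, (∀ γ, 0 ≤ f γ) ∧ IsLaurentExp y m f x

/-- `x` is a cluster monomial `y m ^ p * y (m+1) ^ q`. -/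
def IsClusterMonomial (y : ℤ → Fq) (x : Fq) : Prop :=
  ∃ (m : ℤ) (p q : ℕ), x = y m ^ p * y (m + 1) ^ q

/-- `x` has denominator vector `a = (a₁, a₂)`, i.e. `x = N(y₁,y₂)/(y₁^a₁ y₂^a₂)` with
`N ∈ ℤ[y₁,y₂]` having constant term `1`. -/
def HasDenomVector (y : ℤ → Fq) (a : ℤ × ℤ) (x : Fq) : Prop :=
  ∃ N : MvPolynomial (Fin 2) ℤ, N.coeff 0 = 1 ∧
    x = MvPolynomial.aeval (fun i : Fin 2 => if i = 0 then y 1 else y 2) N /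
        (y 1 ^ a.1 * y 2 ^ a.2)

/-- `B` is a basis of the subring `A` as a `ℤ`-module. -/
def IsZBasisOf (B : Set Fq) (A : Subring Fq) : Prop :=
  LinearIndependent ℤ (fun x : B => (x : Fq)) ∧
    (Submodule.span ℤ B : Set Fq) = (A : Set Fq)

/-- `x` is a finite linear combination of elements of `B` with nonnegative integer
coefficients. -/
def IsNonnegComb (B : Set Fq) (x : Fq) : Prop :=
  ∃ f : Fq →₀ ℕ, ↑f.support ⊆ B ∧ x = f.sum fun v n => n • v

/-- Normalized Chebyshev polynomials: `T₀ = 1`, `T₁ = t`, `T₂ = t² - 2`,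
`T_{n+1} = t T_n - T_{n-1}` for `n ≥ 2`, so `T_n(t + t⁻¹) = tⁿ + t⁻ⁿ` for `n ≥ 1`. -/
def cheb : ℕ → Polynomial ℤ
  | 0 => 1
  | 1 => Polynomial.X
  | 2 => Polynomial.X ^ 2 - 2
  | n + 3 => Polynomial.X * cheb (n + 2) - cheb (n + 1)

/-- The element `z` in the affine cases: `z = y₀y₃ - y₁y₂` for `(b,c) = (2,2)` and
`z = y₀²y₃ - (y₁+2)y₂²` for `(b,c) = (1,4)`. -/
def zElem (b : ℕ) (y : ℤ → Fq) : Fq :=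
  if b = 2 then y 0 * y 3 - y 1 * y 2
  else y 0 ^ 2 * y 3 - (y 1 + 2) * y 2 ^ 2

/-- `z_n = T_n(z)` (so `z_0 = 1`). -/
def zn (b : ℕ) (y : ℤ → Fq) (n : ℕ) : Fq := Polynomial.aeval (zElem b y) (cheb n)

/-- `z_j` for integer index, with the convention `z_j = 0` for `j < 0`. -/
def znI (b : ℕ) (y : ℤ → Fq) (j : ℤ) : Fq := if j < 0 then 0 else zn b y j.toNat

/-- A lattice point viewed in `ℝ²`. -/
def toR (γ : ℤ × ℤ) : ℝ × ℝ := ((γ.1 : ℝ), (γ.2 : ℝ))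

/-- The Newton polygon of a Laurent expansion: the convex hull of its support. -/
def newt (f : ℤ × ℤ →₀ ℤ) : Set (ℝ × ℝ) := convexHull ℝ (toR '' ↑f.support)

/-- The expansion `f` is monic: every vertex (extreme point) of its Newton polygon
carries coefficient `1`. -/
def IsMonicExp (f : ℤ × ℤ →₀ ℤ) : Prop :=
  ∀ γ : ℤ × ℤ, toR γ ∈ Set.extremePoints ℝ (newt f) → f γ = 1

/-- The triangle `Δ(a)` with vertices `(-a₁,-a₂)`, `(-a₁+b a₂, -a₂)`, `(-a₁, -a₂+c a₁)`. -/
def tri (b c : ℕ) (a : ℤ × ℤ) : Set (ℝ × ℝ) :=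
  convexHull ℝ
    {toR (-a.1, -a.2), toR (-a.1 + (b : ℤ) * a.2, -a.2), toR (-a.1, -a.2 + (c : ℤ) * a.1)}

/-- The simple reflection `s₁`. -/
def s1 (b : ℕ) (v : ℤ × ℤ) : ℤ × ℤ := (-v.1 + (b : ℤ) * v.2, v.2)

/-- The simple reflection `s₂`. -/
def s2 (c : ℕ) (v : ℤ × ℤ) : ℤ × ℤ := (v.1, (c : ℤ) * v.1 - v.2)

/-- `a` is a positive real root: it has nonnegative coordinates and lies in the orbit of
`(1,0)` or `(0,1)` under the group generated by `s₁` and `s₂` (since `s₁, s₂` are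
involutions, this orbit is the set of values of words in `s₁, s₂` applied to `(1,0)`
or `(0,1)`). -/
def IsPosRealRoot (b c : ℕ) (a : ℤ × ℤ) : Prop :=
  0 ≤ a.1 ∧ 0 ≤ a.2 ∧
    ∃ (w : List Bool) (e : ℤ × ℤ), (e = (1, 0) ∨ e = (0, 1)) ∧
      a = w.foldr (fun t v => if t then s1 b v else s2 c v) e

/-- `a` is a positive imaginary root. -/
def IsPosImagRoot (b c : ℕ) (a : ℤ × ℤ) : Prop :=
  0 < a.1 ∧ 0 < a.2 ∧ (c : ℤ) * a.1 ^ 2 - (b : ℤ) * c * a.1 * a.2 + (b : ℤ) * a.2 ^ 2 ≤ 0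

/-! ### Auxiliary development for stmt_1 -/

/-- The canonical map `ℚ[x₁,x₂] → F`. -/
def phiF : MvPolynomial (Fin 2) ℚ →+* Fq := algebraMap (MvPolynomial (Fin 2) ℚ) Fq

lemma phiF_inj : Function.Injective phiF :=
  IsFractionRing.injective (MvPolynomial (Fin 2) ℚ) Fq

lemma phiF_ne_zero {p : MvPolynomial (Fin 2) ℚ} (h : p ≠ 0) : phiF p ≠ 0 := by
  rw [Ne, map_eq_zero_iff phiF phiF_inj]; exact h

/-- kill the i-th variable -/
def kilV (i : Fin 2) : MvPolynomial (Fin 2) ℚ →ₐ[ℚ] MvPolynomial (Fin 2) ℚ :=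
  aeval (fun j => if j = i then 0 else X j)

lemma exists_decompV (i : Fin 2) (p : MvPolynomial (Fin 2) ℚ) :
    ∃ q, p = X i * q + kilV i p := by
  induction p using MvPolynomial.induction_on with
  | C a => exact ⟨0, by simp [kilV]⟩
  | add p r hp hr =>
    obtain ⟨q1, h1⟩ := hp; obtain ⟨q2, h2⟩ := hr
    exact ⟨q1 + q2, by rw [map_add]; nth_rewrite 1 [h1, h2]; ring⟩
  | mul_X p j hp =>
    obtain ⟨q, h⟩ := hp
    by_cases hj : j = i
    · subst hj
      refine ⟨p, ?_⟩
      rw [map_mul, kilV, aeval_X, if_pos rfl, mul_zero, add_zero, mul_comm]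
    · refine ⟨q * X j, ?_⟩
      rw [map_mul, kilV, aeval_X, if_neg hj]
      nth_rewrite 1 [h]; rw [kilV]; ring

lemma X_dvd_iff_kilV (i : Fin 2) (p : MvPolynomial (Fin 2) ℚ) : X i ∣ p ↔ kilV i p = 0 := by
  constructor
  · rintro ⟨r, rfl⟩; rw [map_mul]; simp [kilV]
  · intro h
    obtain ⟨q, hq⟩ := exists_decompV i p
    exact ⟨q, by rw [hq, h, add_zero]⟩

lemma primeX (i : Fin 2) : Prime (X i : MvPolynomial (Fin 2) ℚ) := by
  refine ⟨MvPolynomial.X_ne_zero i, ?_, ?_⟩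
  · intro h
    have h2 := h.map (kilV i)
    rw [kilV] at h2; simp only [aeval_X, if_pos rfl] at h2
    exact not_isUnit_zero h2
  · intro a b hab
    rw [X_dvd_iff_kilV] at hab ⊢
    rw [X_dvd_iff_kilV (p := b)]
    rw [map_mul] at hab
    rcases mul_eq_zero.1 hab with h | h
    · exact Or.inl h
    · exact Or.inr h

lemma not_dvd_of_eval (i : Fin 2) (p : MvPolynomial (Fin 2) ℚ) (v : Fin 2 → ℚ)
    (hv : v i = 0) (h : eval v p ≠ 0) : ¬ X i ∣ p := by
  rintro ⟨q, rfl⟩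
  simp [hv] at h

lemma XneF (i : Fin 2) : phiF (X i) ≠ 0 := phiF_ne_zero (X_ne_zero i)

/-- `f` has order `n` at `Xᵢ = 0`. -/
def ordIs (i : Fin 2) (n : ℤ) (f : Fq) : Prop :=
  ∃ a b : MvPolynomial (Fin 2) ℚ, ¬ X i ∣ a ∧ ¬ X i ∣ b ∧
    f * phiF b = phiF a * (phiF (X i)) ^ n

lemma ordIs_ne_zero {i n f} (h : ordIs i n f) : f ≠ 0 := by
  obtain ⟨a, b, ha, hb, he⟩ := h
  rintro rfl
  rw [zero_mul] at he
  have : phiF a = 0 := by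
    rcases mul_eq_zero.1 he.symm with h | h
    · exact h
    · exact absurd h (zpow_ne_zero _ (XneF i))
  exact ha (by rw [phiF_inj (this.trans (map_zero phiF).symm)]; exact dvd_zero _)

lemma dvd_of_phiF_eq {i : Fin 2} {p q : MvPolynomial (Fin 2) ℚ} {d : ℤ} (hd : 0 < d)
    (h : phiF p = phiF q * phiF (X i) ^ d) : X i ∣ p := by
  rw [show d = ((d.toNat : ℕ) : ℤ) by omega, zpow_natCast, ← map_pow, ← map_mul] at h
  have hr : p = q * X i ^ d.toNat := phiF_inj h
  have : (X i : MvPolynomial (Fin 2) ℚ) ∣ (X i : MvPolynomial (Fin 2) ℚ) ^ d.toNat :=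
    dvd_pow_self (X i : MvPolynomial (Fin 2) ℚ) (show d.toNat ≠ 0 by omega)
  exact hr ▸ this.mul_left q

lemma ord_key {i : Fin 2} {A B : MvPolynomial (Fin 2) ℚ} {n m : ℤ}
    (hA : ¬ X i ∣ A) (hB : ¬ X i ∣ B)
    (h : phiF A * phiF (X i) ^ n = phiF B * phiF (X i) ^ m) : n = m := by
  have hXz := XneF i
  by_contra hne
  rcases lt_or_gt_of_ne hne with hlt | hlt
  · have h3 : phiF A = phiF B * phiF (X i) ^ (m - n) := by
      rw [zpow_sub₀ hXz, ← mul_div_assoc, eq_div_iff (zpow_ne_zero n hXz)]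
      exact h
    exact hA (dvd_of_phiF_eq (by omega) h3)
  · have h3 : phiF B = phiF A * phiF (X i) ^ (n - m) := by
      rw [zpow_sub₀ hXz, ← mul_div_assoc, eq_div_iff (zpow_ne_zero m hXz)]
      exact h.symm
    exact hB (dvd_of_phiF_eq (by omega) h3)

lemma ordIs_unique {i n m f} (h1 : ordIs i n f) (h2 : ordIs i m f) : n = m := by
  obtain ⟨a, b, ha, hb, he⟩ := h1
  obtain ⟨a', b', ha', hb', he'⟩ := h2
  have notdvd : ∀ p q : MvPolynomial (Fin 2) ℚ, ¬ X i ∣ p → ¬ X i ∣ q → ¬ X i ∣ p * q := by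
    intro p q hp hq hpq
    rcases (primeX i).2.2 _ _ hpq with h | h
    exacts [hp h, hq h]
  refine ord_key (notdvd _ _ ha hb') (notdvd _ _ ha' hb) ?_
  rw [map_mul, map_mul]
  calc phiF a * phiF b' * phiF (X i) ^ n = phiF a * phiF (X i) ^ n * phiF b' := by ring
  _ = f * phiF b * phiF b' := by rw [he]
  _ = f * phiF b' * phiF b := by ring
  _ = phiF a' * phiF (X i) ^ m * phiF b := by rw [he']
  _ = phiF a' * phiF b * phiF (X i) ^ m := by ring

lemma ordIs_mul {i n m f g} (h1 : ordIs i n f) (h2 : ordIs i m g) :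
    ordIs i (n + m) (f * g) := by
  obtain ⟨a, b, ha, hb, he⟩ := h1
  obtain ⟨a', b', ha', hb', he'⟩ := h2
  refine ⟨a * a', b * b', ?_, ?_, ?_⟩
  · intro h; rcases (primeX i).2.2 _ _ h with h | h; exacts [ha h, ha' h]
  · intro h; rcases (primeX i).2.2 _ _ h with h | h; exacts [hb h, hb' h]
  · rw [map_mul, map_mul, zpow_add₀ (XneF i)]
    calc f * g * (phiF b * phiF b') = (f * phiF b) * (g * phiF b') := by ring
    _ = (phiF a * phiF (X i) ^ n) * (phiF a' * phiF (X i) ^ m) := by rw [he, he']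
    _ = phiF a * phiF a' * (phiF (X i) ^ n * phiF (X i) ^ m) := by ring

lemma ordIs_one (i : Fin 2) : ordIs i 0 (1 : Fq) := by
  refine ⟨1, 1, ?_, ?_, by simp⟩ <;>
  · intro h
    exact (primeX i).2.1 (isUnit_of_dvd_one h)

lemma ordIs_pow {i n f} (h : ordIs i n f) (e : ℕ) : ordIs i (e * n) (f ^ e) := by
  induction e with
  | zero => simpa using ordIs_one i
  | succ k ih =>
    rw [show ((k+1:ℕ):ℤ) * n = (k:ℤ)*n + n by push_cast; ring, pow_succ]
    exact ordIs_mul ih h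

lemma ordIs_add {i n m f g} (h1 : ordIs i n f) (h2 : ordIs i m g) (hnm : n < m) :
    ordIs i n (f + g) := by
  obtain ⟨a, b, ha, hb, he⟩ := h1
  obtain ⟨a', b', ha', hb', he'⟩ := h2
  have hXz := XneF i
  set k : ℕ := (m - n).toNat with hk
  refine ⟨a * b' + a' * b * X i ^ k, b * b', ?_, ?_, ?_⟩
  · intro h
    have h2 : X i ∣ a * b' := by
      have : X i ∣ a' * b * X i ^ k := (dvd_pow_self (X i) (by omega : k ≠ 0)).mul_left _
      exact (dvd_add_right this).mp (by rwa [add_comm] at h)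
    rcases (primeX i).2.2 _ _ h2 with h | h; exacts [ha h, hb' h]
  · intro h; rcases (primeX i).2.2 _ _ h with h | h; exacts [hb h, hb' h]
  · simp only [map_add, map_mul, map_pow]
    have hm : (phiF (X i)) ^ m = (phiF (X i)) ^ n * (phiF (X i)) ^ (k:ℤ) := by
      rw [← zpow_add₀ hXz]; congr 1; omega
    calc (f + g) * (phiF b * phiF b')
        = (f * phiF b) * phiF b' + (g * phiF b') * phiF b := by ring
      _ = (phiF a * phiF (X i) ^ n) * phiF b' + (phiF a' * phiF (X i) ^ m) * phiF b := by
          rw [he, he']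
      _ = (phiF a * phiF b' + phiF a' * phiF b * phiF (X i) ^ (k:ℤ)) * phiF (X i) ^ n := by
          rw [hm]; ring
      _ = (phiF a * phiF b' + phiF a' * phiF b * phiF (X i) ^ (k:ℕ)) * phiF (X i) ^ n := by
          rw [zpow_natCast]

lemma ordIs_div {i q r f g h} (hf : ordIs i q f) (hh : ordIs i r h) (hfg : f * g = h) :
    ordIs i (r - q) g := by
  obtain ⟨a, b, ha, hb, he⟩ := hf
  obtain ⟨a', b', ha', hb', he'⟩ := hh
  have hXz := XneF i
  refine ⟨a' * b, b' * a, ?_, ?_, ?_⟩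
  · intro hd; rcases (primeX i).2.2 _ _ hd with hd | hd; exacts [ha' hd, hb hd]
  · intro hd; rcases (primeX i).2.2 _ _ hd with hd | hd; exacts [hb' hd, ha hd]
  · rw [map_mul, map_mul]
    have hq : phiF (X i) ^ q ≠ 0 := zpow_ne_zero _ hXz
    apply mul_right_cancel₀ hq
    calc g * (phiF b' * phiF a) * phiF (X i) ^ q
        = g * phiF b' * (phiF a * phiF (X i) ^ q) := by ring
      _ = g * phiF b' * (f * phiF b) := by rw [he]
      _ = (f * g) * phiF b' * phiF b := by ring
      _ = h * phiF b' * phiF b := by rw [hfg]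
      _ = (phiF a' * phiF (X i) ^ r) * phiF b := by rw [he']
      _ = phiF a' * phiF b * phiF (X i) ^ (r - q) * phiF (X i) ^ q := by
          have hz : phiF (X i) ^ (r - q) * phiF (X i) ^ q = phiF (X i) ^ r := by
            rw [← zpow_add₀ hXz]; congr 1; ring
          rw [mul_assoc (phiF a' * phiF b), hz]; ring

lemma ordIs_pow_add_one {i n f} (h : ordIs i n f) (e : ℕ) (hn : n < 0) (he : 0 < e) :
    ordIs i ((e:ℤ) * n) (f ^ e + 1) :=
  ordIs_add (ordIs_pow h e) (ordIs_one i)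
    (mul_neg_of_pos_of_neg (by exact_mod_cast he) hn)

def epsBC (b c : ℕ) (k : ℕ) : ℤ := if Even k then (c : ℤ) else (b : ℤ)

def seqD (b c : ℕ) : ℕ → ℤ × ℤ
  | 0 => (1, 0)
  | 1 => ((b : ℤ), 1)
  | k + 2 => (epsBC b c k * (seqD b c (k+1)).1 - (seqD b c k).1,
              epsBC b c k * (seqD b c (k+1)).2 - (seqD b c k).2)

lemma eps_mul (b c k) : epsBC b c k * epsBC b c (k+1) = (b : ℤ) * c := by
  rcases Nat.even_or_odd k with h | h <;>
    simp [epsBC, h, Nat.even_add_one, Nat.not_even_iff_odd.mpr, ← Nat.not_even_iff_odd] <;> ring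

lemma eps_succ_succ (b c k) : epsBC b c (k+2) = epsBC b c k := by
  simp [epsBC, Nat.even_add]

lemma eps_ge_one {b c : ℕ} (hb : 1 ≤ b) (hc : 1 ≤ c) (k : ℕ) : 1 ≤ epsBC b c k := by
  unfold epsBC; split <;> omega

def Qf (b c : ℕ) (x : ℤ × ℤ) : ℤ := c * x.1^2 - b * c * x.1 * x.2 + b * x.2^2

def Bf (b c : ℕ) (u v : ℤ × ℤ) : ℤ :=
  2*c*u.1*v.1 - b*c*(u.1*v.2 + u.2*v.1) + 2*b*u.2*v.2

def InvBC (b c : ℕ) (k : ℕ) : Prop :=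
  0 ≤ (seqD b c k).1 ∧ 0 ≤ (seqD b c k).2 ∧
  1 ≤ (seqD b c (k+1)).1 ∧ 1 ≤ (seqD b c (k+1)).2 ∧
  (seqD b c k).1 * (seqD b c (k+1)).2 - (seqD b c k).2 * (seqD b c (k+1)).1 = 1 ∧
  2 * (seqD b c k).1 + 1 ≤ epsBC b c k * (seqD b c (k+1)).1 ∧
  2 * (seqD b c k).2 + 1 ≤ epsBC b c k * (seqD b c (k+1)).2 ∧
  epsBC b c (k+1) * (seqD b c k).1 + 1 ≤ 2 * (seqD b c (k+1)).1 ∧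
  epsBC b c (k+1) * (seqD b c k).2 + 1 ≤ 2 * (seqD b c (k+1)).2 ∧
  Qf b c (seqD b c k) = epsBC b c k ∧
  Qf b c (seqD b c (k+1)) = epsBC b c (k+1) ∧
  Bf b c (seqD b c k) (seqD b c (k+1)) = (b : ℤ) * c

lemma inv_all (b c : ℕ) (hb : 1 ≤ b) (hc : 1 ≤ c) (hbc : 4 ≤ b * c) :
    ∀ k, InvBC b c k := by
  have hbc' : (4 : ℤ) ≤ (b : ℤ) * c := by exact_mod_cast hbc
  have hb' : (1 : ℤ) ≤ (b : ℤ) := by exact_mod_cast hb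
  have hc' : (1 : ℤ) ≤ (c : ℤ) := by exact_mod_cast hc
  intro k
  induction k with
  | zero =>
    have e0 : epsBC b c 0 = (c:ℤ) := by simp [epsBC]
    have e1 : epsBC b c 1 = (b:ℤ) := by simp [epsBC]
    refine ⟨?_, ?_, ?_, ?_, ?_, ?_, ?_, ?_, ?_, ?_, ?_, ?_⟩ <;>
      · show _
        norm_num [seqD, Qf, Bf, e0, e1]
        try nlinarith
  | succ k ih =>
    obtain ⟨hu1, hu2, hv1, hv2, hcross, h3a, h3b, h4a, h4b, hQu, hQv, hB⟩ := ih
    have hee' : epsBC b c k * epsBC b c (k+1) = (b:ℤ) * c := eps_mul b c k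
    have hw1 : (seqD b c (k+2)).1 = epsBC b c k * (seqD b c (k+1)).1 - (seqD b c k).1 := by
      rw [seqD]
    have hw2 : (seqD b c (k+2)).2 = epsBC b c k * (seqD b c (k+1)).2 - (seqD b c k).2 := by
      rw [seqD]
    have he2 : epsBC b c (k+2) = epsBC b c k := eps_succ_succ b c k
    have hepos : 1 ≤ epsBC b c k := eps_ge_one hb hc k
    have he'pos : 1 ≤ epsBC b c (k+1) := eps_ge_one hb hc (k+1)
    refine ⟨by omega, by omega, ?_, ?_, ?_, ?_, ?_, ?_, ?_, hQv, ?_, ?_⟩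
    · rw [hw1]; linarith [h3a, hu1]
    · rw [hw2]; linarith [h3b, hu2]
    · rw [hw1, hw2]; linear_combination hcross
    · rw [hw1]
      have hx : epsBC b c (k+1) * (epsBC b c k * (seqD b c (k+1)).1 - (seqD b c k).1)
          = ((b:ℤ)*c) * (seqD b c (k+1)).1 - epsBC b c (k+1) * (seqD b c k).1 := by
        rw [← hee']; ring
      have hy : 4 * (seqD b c (k+1)).1 ≤ ((b:ℤ)*c) * (seqD b c (k+1)).1 :=
        mul_le_mul_of_nonneg_right hbc' (by linarith)
      linarith [h4a]
    · rw [hw2]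
      have hx : epsBC b c (k+1) * (epsBC b c k * (seqD b c (k+1)).2 - (seqD b c k).2)
          = ((b:ℤ)*c) * (seqD b c (k+1)).2 - epsBC b c (k+1) * (seqD b c k).2 := by
        rw [← hee']; ring
      have hy : 4 * (seqD b c (k+1)).2 ≤ ((b:ℤ)*c) * (seqD b c (k+1)).2 :=
        mul_le_mul_of_nonneg_right hbc' (by linarith)
      linarith [h4b]
    · rw [he2, hw1]; linarith [h3a]
    · rw [he2, hw2]; linarith [h3b]
    · rw [he2]
      have hq : Qf b c (seqD b c (k+2)) =
          (epsBC b c k)^2 * Qf b c (seqD b c (k+1))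
            - epsBC b c k * Bf b c (seqD b c k) (seqD b c (k+1))
            + Qf b c (seqD b c k) := by
        simp only [Qf, Bf, hw1, hw2]; ring
      rw [hq, hQv, hB, hQu]
      linear_combination epsBC b c k * hee'
    · have hbb : Bf b c (seqD b c (k+1)) (seqD b c (k+2)) =
          2 * epsBC b c k * Qf b c (seqD b c (k+1))
            - Bf b c (seqD b c k) (seqD b c (k+1)) := by
        simp only [Qf, Bf, hw1, hw2]; ring
      rw [hbb, hQv, hB]
      linear_combination 2 * hee'

section Seq
variable {b c : ℕ} (hb : 1 ≤ b) (hc : 1 ≤ c) (hbc : 4 ≤ b * c)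
include hb hc hbc

lemma seqD_fst_pos : ∀ k, 1 ≤ (seqD b c k).1 := by
  intro k
  cases k with
  | zero => norm_num [seqD]
  | succ k => exact (inv_all b c hb hc hbc k).2.2.1

lemma seqD_snd_nonneg : ∀ k, 0 ≤ (seqD b c k).2 :=
  fun k => (inv_all b c hb hc hbc k).2.1

lemma seqD_snd_pos : ∀ k, 1 ≤ (seqD b c (k+1)).2 :=
  fun k => (inv_all b c hb hc hbc k).2.2.2.1

lemma seqD_injective : Function.Injective (seqD b c) := by
  have hmono : StrictMono (fun k => ((seqD b c k).2 : ℚ) / ((seqD b c k).1 : ℚ)) := by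
    apply strictMono_nat_of_lt_succ
    intro k
    have h1 : (0:ℚ) < ((seqD b c k).1 : ℚ) := by
      exact_mod_cast (by linarith [seqD_fst_pos hb hc hbc k] : (0:ℤ) < (seqD b c k).1)
    have h2 : (0:ℚ) < ((seqD b c (k+1)).1 : ℚ) := by
      exact_mod_cast (by linarith [seqD_fst_pos hb hc hbc (k+1)] : (0:ℤ) < (seqD b c (k+1)).1)
    rw [div_lt_div_iff₀ h1 h2]
    have hcross := (inv_all b c hb hc hbc k).2.2.2.2.1
    have : ((seqD b c k).2 : ℤ) * (seqD b c (k+1)).1 < (seqD b c (k+1)).2 * (seqD b c k).1 := by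
      have := hcross; nlinarith [hcross]
    exact_mod_cast this
  intro k l hkl
  by_contra hne
  rcases lt_or_gt_of_ne hne with h | h
  · exact absurd (congrArg (fun x : ℤ × ℤ => ((x.2 : ℚ) / (x.1 : ℚ))) hkl) (ne_of_lt (hmono h))
  · exact absurd (congrArg (fun x : ℤ × ℤ => ((x.2 : ℚ) / (x.1 : ℚ))) hkl) (ne_of_gt (hmono h))

end Seq

/-- separation of forward and backward denominator vectors -/
lemma seqD_ne_swap {b c : ℕ} (hb : 1 ≤ b) (hc : 1 ≤ c) (hbc : 4 ≤ b * c) (k l : ℕ) :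
    seqD b c k ≠ ((seqD c b l).2, (seqD c b l).1) := by
  intro hx
  have hcb : 4 ≤ c * b := by rw [Nat.mul_comm]; exact hbc
  obtain ⟨_, _, hv1, hv2, hcross, _, _, h4a, h4b, hQu, hQv, hB⟩ := inv_all b c hb hc hbc k
  obtain ⟨_, _, hw1', hw2', hcross', _, _, h4a', h4b', hQu', hQv', hB'⟩ := inv_all c b hc hb hcb l
  set x := seqD b c k with hxdef
  set v := seqD b c (k+1) with hvdef
  set u' := seqD c b l with hudef
  set w' := seqD c b (l+1) with hwdef
  set e := epsBC b c k
  set e' := epsBC b c (k+1)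
  set g := epsBC c b l
  set g' := epsBC c b (l+1)
  have hee' : e * e' = (b:ℤ) * c := eps_mul b c k
  have hgg' : g * g' = (c:ℤ) * b := eps_mul c b l
  have hx1 : x.1 = u'.2 := by rw [hx]
  have hx2 : x.2 = u'.1 := by rw [hx]
  -- Q(x) in the (b,c) world equals Q(u') in the (c,b) world
  have hQswap : Qf b c x = Qf c b u' := by
    rw [Qf, Qf, hx1, hx2]; ring
  have heg : e = g := by rw [← hQu, hQswap, hQu']
  have hepos : 1 ≤ e := eps_ge_one hb hc k
  have he'g' : e' = g' := by
    have h1 : e * e' = e * g' := by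
      rw [hee', heg, hgg']; ring
    exact mul_left_cancel₀ (by omega) h1
  -- w in (b,c) coordinates is (w'.2, w'.1); write w = A x - v
  set w1 : ℤ := w'.2 with hw1def
  set w2 : ℤ := w'.1 with hw2def
  set A : ℤ := w1 * v.2 - w2 * v.1 with hAdef
  have hcw : x.1 * w2 - x.2 * w1 = -1 := by
    rw [hx1, hx2]; linear_combination (-1 : ℤ) * hcross'
  have hw1eq : w1 = A * x.1 - v.1 := by
    linear_combination (-w1) * hcross + v.1 * hcw
  have hw2eq : w2 = A * x.2 - v.2 := by
    linear_combination (-w2) * hcross + v.2 * hcw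
  -- B(x, w) = c*b, expand to get A * e = b*c
  have hBxw : 2*(c:ℤ)*x.1*w1 - (b:ℤ)*c*(x.1*w2 + x.2*w1) + 2*(b:ℤ)*x.2*w2 = (b:ℤ)*c := by
    have : Bf c b u' w' = (c:ℤ)*b := hB'
    rw [Bf] at this
    rw [hx1, hx2]
    linear_combination this
  have hAe : A * (2 * e) = 2 * ((b:ℤ)*c) := by
    have hQx : Qf b c x = e := hQu
    rw [Qf] at hQx
    have hBxv : Bf b c x v = (b:ℤ)*c := hB
    rw [Bf] at hBxv
    -- B(x, A x - v) = 2 A Q(x) - B(x,v)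
    linear_combination hBxw + hBxv - 2*A*hQx
      - (2*(c:ℤ)*x.1 - (b:ℤ)*c*x.2) * hw1eq - (2*(b:ℤ)*x.2 - (b:ℤ)*c*x.1) * hw2eq
  have hAα : A = e' := by
    have h1 : A * (2 * e) = e' * (2 * e) := by
      rw [hAe, ← hee']; ring
    exact mul_right_cancel₀ (by omega) h1
  -- contradiction on first components
  -- forward: e' * x.1 + 1 ≤ 2 * v.1 (h4a)
  -- backward: g' * u'.2 + 1 ≤ 2 * w'.2, i.e. e' * x.1 + 1 ≤ 2 * w1
  have hbw : e' * x.1 + 1 ≤ 2 * w1 := by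
    rw [he'g', hx1]; exact h4b'
  have h2w : w1 = e' * x.1 - v.1 := by rw [hw1eq, hAα]
  linarith [h4a, hbw]

/-! ### Orders of the cluster variables -/

section ClusterOrd

variable {b c : ℕ} {y : ℤ → Fq}

lemma gen_eq_phiF (i : Fin 2) : gen i = phiF (X i) := rfl

lemma nd1 (i : Fin 2) : ¬ X i ∣ (1 : MvPolynomial (Fin 2) ℚ) :=
  fun h => (primeX i).2.1 (isUnit_of_dvd_one h)

lemma ord_y1 (h1 : y 1 = gen 0) : ordIs 0 1 (y 1) ∧ ordIs 1 0 (y 1) := by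
  constructor
  · exact ⟨1, 1, nd1 0, nd1 0, by
      rw [h1, gen_eq_phiF, map_one, mul_one, one_mul, zpow_one]⟩
  · refine ⟨X 0, 1, ?_, nd1 1, by
      rw [h1, gen_eq_phiF, map_one, mul_one, zpow_zero, mul_one]⟩
    exact not_dvd_of_eval 1 _ ![1, 0] rfl (by norm_num)

lemma ord_y2 (h2 : y 2 = gen 1) : ordIs 0 0 (y 2) ∧ ordIs 1 1 (y 2) := by
  constructor
  · refine ⟨X 1, 1, ?_, nd1 0, by
      rw [h2, gen_eq_phiF, map_one, mul_one, zpow_zero, mul_one]⟩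
    exact not_dvd_of_eval 0 _ ![0, 1] rfl (by norm_num)
  · exact ⟨1, 1, nd1 1, nd1 1, by
      rw [h2, gen_eq_phiF, map_one, mul_one, one_mul, zpow_one]⟩

/-- forward orders: `ord (y (k+3)) = - seqD b c k` -/
lemma ord_forward (hb : 0 < b) (hc : 0 < c) (hbc : 4 ≤ b * c) (hy : IsClusterSeq b c y) :
    ∀ k : ℕ, ordIs 0 (-(seqD b c k).1) (y ((k:ℤ)+3)) ∧ ordIs 1 (-(seqD b c k).2) (y ((k:ℤ)+3)) := by
  obtain ⟨hy1, hy2, hrel⟩ := hy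
  have hy1o := ord_y1 hy1
  have hy2o := ord_y2 hy2
  -- the relation at m = 2 : y 1 * y 3 = y 2 ^ c + 1
  have hr2 : y 1 * y 3 = y 2 ^ c + 1 := by
    have := hrel 2
    rw [if_neg (by decide : ¬ Odd (2:ℤ))] at this
    norm_num at this
    exact this
  have hrhs2 : y 2 ^ c + 1 = phiF (X 1 ^ c + 1) := by
    rw [hy2, gen_eq_phiF, map_add, map_pow, map_one]
  -- order of y 3
  have hordA0 : ordIs 0 0 (y 2 ^ c + 1) := by
    refine ⟨X 1 ^ c + 1, 1, ?_, nd1 0, by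
      rw [map_one, mul_one, zpow_zero, mul_one, hrhs2]⟩
    exact not_dvd_of_eval 0 _ ![0, 1] rfl (by norm_num)
  have hordA1 : ordIs 1 0 (y 2 ^ c + 1) := by
    refine ⟨X 1 ^ c + 1, 1, ?_, nd1 1, by
      rw [map_one, mul_one, zpow_zero, mul_one, hrhs2]⟩
    exact not_dvd_of_eval 1 _ ![1, 0] rfl (by norm_num [zero_pow hc.ne'])
  have hy3o : ordIs 0 (-1) (y 3) ∧ ordIs 1 0 (y 3) := by
    constructor
    · have := ordIs_div hy1o.1 hordA0 hr2
      norm_num at this; exact this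
    · have := ordIs_div hy1o.2 hordA1 hr2
      norm_num at this; exact this
  -- the relation at m = 3 : y 2 * y 4 = y 3 ^ b + 1
  have hr3 : y 2 * y 4 = y 3 ^ b + 1 := by
    have := hrel 3
    rw [if_pos (by decide : Odd (3:ℤ))] at this
    norm_num at this
    exact this
  -- explicit form of y 3
  have hy3X : y 3 * phiF (X 0) = phiF (X 1 ^ c + 1) := by
    rw [← hrhs2, ← hr2, hy1, gen_eq_phiF]; ring
  have hordB1 : ordIs 1 0 (y 3 ^ b + 1) := by
    refine ⟨(X 1 ^ c + 1) ^ b + X 0 ^ b, X 0 ^ b, ?_, ?_, ?_⟩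
    · exact not_dvd_of_eval 1 _ ![1, 0] rfl (by norm_num [zero_pow hc.ne'])
    · exact not_dvd_of_eval 1 _ ![1, 0] rfl (by norm_num)
    · rw [zpow_zero, mul_one, map_add, map_pow, map_pow, add_mul, one_mul,
        ← mul_pow, hy3X]
  have hordB0 : ordIs 0 (-(b:ℤ)) (y 3 ^ b + 1) := by
    have := ordIs_pow_add_one hy3o.1 b (by norm_num) hb
    simpa using this
  have hy4o : ordIs 0 (-(b:ℤ)) (y 4) ∧ ordIs 1 (-1) (y 4) := by
    constructor
    · have := ordIs_div hy2o.1 hordB0 hr3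
      simpa using this
    · have := ordIs_div hy2o.2 hordB1 hr3
      norm_num at this; exact this
  -- two-step induction
  have key : ∀ k : ℕ,
      (ordIs 0 (-(seqD b c k).1) (y ((k:ℤ)+3)) ∧ ordIs 1 (-(seqD b c k).2) (y ((k:ℤ)+3))) ∧
      (ordIs 0 (-(seqD b c (k+1)).1) (y ((k:ℤ)+4)) ∧
        ordIs 1 (-(seqD b c (k+1)).2) (y ((k:ℤ)+4))) := by
    intro k
    induction k with
    | zero =>
      constructor
      · constructor
        · show ordIs 0 (-(1:ℤ)) (y ((0:ℤ)+3))
          norm_num; exact hy3o.1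
        · show ordIs 1 (-(0:ℤ)) (y ((0:ℤ)+3))
          norm_num; exact hy3o.2
      · constructor
        · show ordIs 0 (-((b:ℕ):ℤ)) (y ((0:ℤ)+4))
          norm_num; exact hy4o.1
        · show ordIs 1 (-(1:ℤ)) (y ((0:ℤ)+4))
          norm_num; exact hy4o.2
    | succ k ih =>
      obtain ⟨hk, hk1⟩ := ih
      refine ⟨hk1, ?_⟩
      -- use the relation at m = k + 4
      have hr := hrel ((k:ℤ)+4)
      rw [show (k:ℤ)+4-1 = (k:ℤ)+3 by ring, show (k:ℤ)+4+1 = (k:ℤ)+5 by ring] at hr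
      have hD1pos : 1 ≤ (seqD b c (k+1)).1 := seqD_fst_pos hb hc hbc (k+1)
      have hD2pos : 1 ≤ (seqD b c (k+1)).2 := seqD_snd_pos hb hc hbc k
      have hw1 : (seqD b c (k+2)).1
          = epsBC b c k * (seqD b c (k+1)).1 - (seqD b c k).1 := by rw [seqD]
      have hw2 : (seqD b c (k+2)).2
          = epsBC b c k * (seqD b c (k+1)).2 - (seqD b c k).2 := by rw [seqD]
      have hidx : ((k+1:ℕ):ℤ)+4 = (k:ℤ)+5 := by push_cast; ring
      rw [hidx]
      rcases Nat.even_or_odd k with hk2 | hk2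
      · -- exponent c
        have hodd : ¬ Odd ((k:ℤ)+4) := by
          obtain ⟨t, rfl⟩ := hk2
          rintro ⟨s, hs⟩
          omega
        rw [if_neg hodd] at hr
        have heps : epsBC b c k = (c:ℤ) := by simp [epsBC, hk2]
        constructor
        · have hpow := ordIs_pow_add_one hk1.1 c (by omega) hc
          have hdiv := ordIs_div hk.1 hpow hr
          have : (c:ℤ) * -(seqD b c (k+1)).1 - -(seqD b c k).1 = -(seqD b c (k+2)).1 := by
            rw [hw1, heps]; ring
          rwa [this] at hdiv
        · have hpow := ordIs_pow_add_one hk1.2 c (by omega) hc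
          have hdiv := ordIs_div hk.2 hpow hr
          have : (c:ℤ) * -(seqD b c (k+1)).2 - -(seqD b c k).2 = -(seqD b c (k+2)).2 := by
            rw [hw2, heps]; ring
          rwa [this] at hdiv
      · -- exponent b
        have hodd : Odd ((k:ℤ)+4) := by
          obtain ⟨t, rfl⟩ := hk2
          exact ⟨(t:ℤ)+2, by push_cast; ring⟩
        rw [if_pos hodd] at hr
        have heps : epsBC b c k = (b:ℤ) := by
          simp [epsBC, Nat.not_even_iff_odd.mpr hk2]
        constructor
        · have hpow := ordIs_pow_add_one hk1.1 b (by omega) hb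
          have hdiv := ordIs_div hk.1 hpow hr
          have : (b:ℤ) * -(seqD b c (k+1)).1 - -(seqD b c k).1 = -(seqD b c (k+2)).1 := by
            rw [hw1, heps]; ring
          rwa [this] at hdiv
        · have hpow := ordIs_pow_add_one hk1.2 b (by omega) hb
          have hdiv := ordIs_div hk.2 hpow hr
          have : (b:ℤ) * -(seqD b c (k+1)).2 - -(seqD b c k).2 = -(seqD b c (k+2)).2 := by
            rw [hw2, heps]; ring
          rwa [this] at hdiv
  exact fun k => (key k).1

end ClusterOrd

section ClusterOrd2

variable {b c : ℕ} {y : ℤ → Fq}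

/-- backward orders: `ord (y (-l)) = - swap (seqD c b l)` -/
lemma ord_backward (hb : 0 < b) (hc : 0 < c) (hbc : 4 ≤ b * c) (hy : IsClusterSeq b c y) :
    ∀ l : ℕ, ordIs 0 (-(seqD c b l).2) (y (-(l:ℤ))) ∧ ordIs 1 (-(seqD c b l).1) (y (-(l:ℤ))) := by
  obtain ⟨hy1, hy2, hrel⟩ := hy
  have hcb : 4 ≤ c * b := by rw [Nat.mul_comm]; exact hbc
  have hy1o := ord_y1 hy1
  have hy2o := ord_y2 hy2
  -- the relation at m = 1 : y 0 * y 2 = y 1 ^ b + 1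
  have hr1 : y 0 * y 2 = y 1 ^ b + 1 := by
    have := hrel 1
    rw [if_pos (by decide : Odd (1:ℤ))] at this
    norm_num at this
    exact this
  have hrhs1 : y 1 ^ b + 1 = phiF (X 0 ^ b + 1) := by
    rw [hy1, gen_eq_phiF, map_add, map_pow, map_one]
  have hordA0 : ordIs 0 0 (y 1 ^ b + 1) := by
    refine ⟨X 0 ^ b + 1, 1, ?_, nd1 0, by
      rw [map_one, mul_one, zpow_zero, mul_one, hrhs1]⟩
    exact not_dvd_of_eval 0 _ ![0, 1] rfl (by norm_num [zero_pow hb.ne'])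
  have hordA1 : ordIs 1 0 (y 1 ^ b + 1) := by
    refine ⟨X 0 ^ b + 1, 1, ?_, nd1 1, by
      rw [map_one, mul_one, zpow_zero, mul_one, hrhs1]⟩
    exact not_dvd_of_eval 1 _ ![1, 0] rfl (by norm_num)
  have hr1' : y 2 * y 0 = y 1 ^ b + 1 := by rw [mul_comm]; exact hr1
  have hy0o : ordIs 0 0 (y 0) ∧ ordIs 1 (-1) (y 0) := by
    constructor
    · have := ordIs_div hy2o.1 hordA0 hr1'
      norm_num at this; exact this
    · have := ordIs_div hy2o.2 hordA1 hr1'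
      norm_num at this; exact this
  -- the relation at m = 0 : y (-1) * y 1 = y 0 ^ c + 1
  have hr0 : y (-1) * y 1 = y 0 ^ c + 1 := by
    have := hrel 0
    rw [if_neg (by decide : ¬ Odd (0:ℤ))] at this
    norm_num at this
    exact this
  have hy0X : y 0 * phiF (X 1) = phiF (X 0 ^ b + 1) := by
    rw [← hrhs1, ← hr1, hy2, gen_eq_phiF]
  have hordB0 : ordIs 0 0 (y 0 ^ c + 1) := by
    refine ⟨(X 0 ^ b + 1) ^ c + X 1 ^ c, X 1 ^ c, ?_, ?_, ?_⟩
    · exact not_dvd_of_eval 0 _ ![0, 1] rfl (by norm_num [zero_pow hb.ne'])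
    · exact not_dvd_of_eval 0 _ ![0, 1] rfl (by norm_num)
    · rw [zpow_zero, mul_one, map_add, map_pow, map_pow, add_mul, one_mul,
        ← mul_pow, hy0X]
  have hordB1 : ordIs 1 (-(c:ℤ)) (y 0 ^ c + 1) := by
    have := ordIs_pow_add_one hy0o.2 c (by norm_num) hc
    simpa using this
  have hr0' : y 1 * y (-1) = y 0 ^ c + 1 := by rw [mul_comm]; exact hr0
  have hym1o : ordIs 0 (-1) (y (-1)) ∧ ordIs 1 (-(c:ℤ)) (y (-1)) := by
    constructor
    · have := ordIs_div hy1o.1 hordB0 hr0'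
      norm_num at this; exact this
    · have := ordIs_div hy1o.2 hordB1 hr0'
      simpa using this
  -- two-step induction
  have key : ∀ l : ℕ,
      (ordIs 0 (-(seqD c b l).2) (y (-(l:ℤ))) ∧ ordIs 1 (-(seqD c b l).1) (y (-(l:ℤ)))) ∧
      (ordIs 0 (-(seqD c b (l+1)).2) (y (-(l:ℤ)-1)) ∧
        ordIs 1 (-(seqD c b (l+1)).1) (y (-(l:ℤ)-1))) := by
    intro l
    induction l with
    | zero =>
      constructor
      · constructor
        · show ordIs 0 (-(0:ℤ)) (y (-(0:ℤ)))
          norm_num; exact hy0o.1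
        · show ordIs 1 (-(1:ℤ)) (y (-(0:ℤ)))
          norm_num; exact hy0o.2
      · constructor
        · show ordIs 0 (-(1:ℤ)) (y (-(0:ℤ)-1))
          norm_num; exact hym1o.1
        · show ordIs 1 (-((c:ℕ):ℤ)) (y (-(0:ℤ)-1))
          norm_num; exact hym1o.2
    | succ l ih =>
      obtain ⟨hk, hk1⟩ := ih
      have hidx1 : -((l+1:ℕ):ℤ) = -(l:ℤ)-1 := by push_cast; ring
      have hidx2 : -((l+1:ℕ):ℤ)-1 = -(l:ℤ)-2 := by push_cast; ring
      rw [hidx2, hidx1]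
      refine ⟨hk1, ?_⟩
      -- relation at m = -l-1
      have hr := hrel (-(l:ℤ)-1)
      rw [show -(l:ℤ)-1-1 = -(l:ℤ)-2 by ring, show -(l:ℤ)-1+1 = -(l:ℤ) by ring] at hr
      have hE1pos : 1 ≤ (seqD c b (l+1)).1 := seqD_fst_pos hc hb hcb (l+1)
      have hE2pos : 1 ≤ (seqD c b (l+1)).2 := seqD_snd_pos hc hb hcb l
      have hw1 : (seqD c b (l+2)).1
          = epsBC c b l * (seqD c b (l+1)).1 - (seqD c b l).1 := by rw [seqD]
      have hw2 : (seqD c b (l+2)).2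
          = epsBC c b l * (seqD c b (l+1)).2 - (seqD c b l).2 := by rw [seqD]
      rcases Nat.even_or_odd l with hl2 | hl2
      · -- l even : exponent b
        have hodd : Odd (-(l:ℤ)-1) := by
          obtain ⟨t, rfl⟩ := hl2
          exact ⟨-(t:ℤ)-1, by push_cast; ring⟩
        rw [if_pos hodd] at hr
        have heps : epsBC c b l = (b:ℤ) := by simp [epsBC, hl2]
        have hr' : y (-(l:ℤ)) * y (-(l:ℤ)-2) = y (-(l:ℤ)-1) ^ b + 1 := by
          rw [mul_comm]; exact hr
        constructor
        · have hpow := ordIs_pow_add_one hk1.1 b (by omega) hb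
          have hdiv := ordIs_div hk.1 hpow hr'
          have : (b:ℤ) * -(seqD c b (l+1)).2 - -(seqD c b l).2 = -(seqD c b (l+2)).2 := by
            rw [hw2, heps]; ring
          rwa [this] at hdiv
        · have hpow := ordIs_pow_add_one hk1.2 b (by omega) hb
          have hdiv := ordIs_div hk.2 hpow hr'
          have : (b:ℤ) * -(seqD c b (l+1)).1 - -(seqD c b l).1 = -(seqD c b (l+2)).1 := by
            rw [hw1, heps]; ring
          rwa [this] at hdiv
      · -- l odd : exponent c
        have hodd : ¬ Odd (-(l:ℤ)-1) := by
          obtain ⟨t, rfl⟩ := hl2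
          rintro ⟨s, hs⟩
          push_cast at hs
          omega
        rw [if_neg hodd] at hr
        have heps : epsBC c b l = (c:ℤ) := by
          simp [epsBC, Nat.not_even_iff_odd.mpr hl2]
        have hr' : y (-(l:ℤ)) * y (-(l:ℤ)-2) = y (-(l:ℤ)-1) ^ c + 1 := by
          rw [mul_comm]; exact hr
        constructor
        · have hpow := ordIs_pow_add_one hk1.1 c (by omega) hc
          have hdiv := ordIs_div hk.1 hpow hr'
          have : (c:ℤ) * -(seqD c b (l+1)).2 - -(seqD c b l).2 = -(seqD c b (l+2)).2 := by
            rw [hw2, heps]; ring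
          rwa [this] at hdiv
        · have hpow := ordIs_pow_add_one hk1.2 c (by omega) hc
          have hdiv := ordIs_div hk.2 hpow hr'
          have : (c:ℤ) * -(seqD c b (l+1)).1 - -(seqD c b l).1 = -(seqD c b (l+2)).1 := by
            rw [hw1, heps]; ring
          rwa [this] at hdiv
  exact fun l => (key l).1

end ClusterOrd2
/-- if `bc ≥ 4` then the cluster variables `y m` are pairwise distinct. -/
theorem stmt_1 (b c : ℕ) (hb : 0 < b) (hc : 0 < c) (hbc : 4 ≤ b * c)
    (y : ℤ → Fq) (hy : IsClusterSeq b c y) :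
    Function.Injective y := by
  -- Auxiliary: every y m has a known order vector
  have hb1 : 1 ≤ b := hb
  have hc1 : 1 ≤ c := hc
  have hcb : 4 ≤ c * b := by rw [Nat.mul_comm]; exact hbc
  have hfw := ord_forward hb hc hbc hy
  have hbw := ord_backward hb hc hbc hy
  have h1o := ord_y1 hy.1
  have h2o := ord_y2 hy.2.1
  have hvec : ∀ m : ℤ, ∃ p : ℤ × ℤ, ordIs 0 p.1 (y m) ∧ ordIs 1 p.2 (y m) ∧
      ((m = 1 ∧ p = (1, 0)) ∨ (m = 2 ∧ p = (0, 1)) ∨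
        (∃ k : ℕ, m = (k:ℤ)+3 ∧ p = (-(seqD b c k).1, -(seqD b c k).2)) ∨
        (∃ l : ℕ, m = -(l:ℤ) ∧ p = (-(seqD c b l).2, -(seqD c b l).1))) := by
    intro m
    rcases (show m = 1 ∨ m = 2 ∨ 3 ≤ m ∨ m ≤ 0 by omega) with rfl | rfl | h | h
    · exact ⟨(1, 0), h1o.1, h1o.2, Or.inl ⟨rfl, rfl⟩⟩
    · exact ⟨(0, 1), h2o.1, h2o.2, Or.inr (Or.inl ⟨rfl, rfl⟩)⟩
    · refine ⟨(-(seqD b c (m-3).toNat).1, -(seqD b c (m-3).toNat).2), ?_, ?_,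
        Or.inr (Or.inr (Or.inl ⟨(m-3).toNat, by omega, rfl⟩))⟩
      · have := (hfw (m-3).toNat).1
        rwa [show (((m-3).toNat:ℤ))+3 = m by omega] at this
      · have := (hfw (m-3).toNat).2
        rwa [show (((m-3).toNat:ℤ))+3 = m by omega] at this
    · refine ⟨(-(seqD c b (-m).toNat).2, -(seqD c b (-m).toNat).1), ?_, ?_,
        Or.inr (Or.inr (Or.inr ⟨(-m).toNat, by omega, rfl⟩))⟩
      · have := (hbw (-m).toNat).1
        rwa [show -(((-m).toNat:ℤ)) = m by omega] at this
      · have := (hbw (-m).toNat).2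
        rwa [show -(((-m).toNat:ℤ)) = m by omega] at this
  intro m n hmn
  obtain ⟨p, hp0, hp1, hpd⟩ := hvec m
  obtain ⟨q, hq0, hq1, hqd⟩ := hvec n
  rw [← hmn] at hq0 hq1
  have hpq : p = q := Prod.ext (ordIs_unique hp0 hq0) (ordIs_unique hp1 hq1)
  subst hpq
  -- positivity facts
  have hDf : ∀ k, 1 ≤ (seqD b c k).1 := seqD_fst_pos hb1 hc1 hbc
  have hDs : ∀ k, 0 ≤ (seqD b c k).2 := seqD_snd_nonneg hb1 hc1 hbc
  have hEf : ∀ l, 1 ≤ (seqD c b l).1 := seqD_fst_pos hc1 hb1 hcb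
  have hEs : ∀ l, 0 ≤ (seqD c b l).2 := seqD_snd_nonneg hc1 hb1 hcb
  rcases hpd with ⟨hm, hp⟩ | ⟨hm, hp⟩ | ⟨k, hm, hp⟩ | ⟨l, hm, hp⟩ <;>
    rcases hqd with ⟨hn, hq⟩ | ⟨hn, hq⟩ | ⟨k', hn, hq⟩ | ⟨l', hn, hq⟩ <;>
      rw [hp, Prod.mk.injEq] at hq <;> obtain ⟨h1, h2⟩ := hq
  · omega
  · omega
  · have := hDf k'; omega
  · have := hEf l'; omega
  · omega
  · omega
  · have := hDs k'; omega
  · have := hEf l'; omega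
  · have := hDf k; omega
  · have := hDs k; omega
  · -- forward = forward
    have hseq : seqD b c k = seqD b c k' := Prod.ext (by omega) (by omega)
    have := seqD_injective hb1 hc1 hbc hseq
    omega
  · -- forward = backward
    exact absurd (Prod.ext (by simpa using h1) (by simpa using h2))
      (seqD_ne_swap hb1 hc1 hbc k l')
  · have := hEf l; omega
  · have := hEf l; omega
  · -- backward = forward
    exact absurd (Prod.ext (show (seqD b c k').1 = (seqD c b l).2 by omega)
      (show (seqD b c k').2 = (seqD c b l).1 by omega)) (seqD_ne_swap hb1 hc1 hbc k' l)
  · -- backward = backward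
    have hseq : seqD c b l = seqD c b l' := Prod.ext (by omega) (by omega)
    have := seqD_injective hc1 hb1 hcb hseq
    omega
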